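/- arXiv:2511.12595 — 3 statements merged into one kernel-verified Lean document; each statement's English description precedes it below -/
import Mathlib

section
/- Method of moments for joint Poisson limits (Theorem 2.4 of the paper, Bollobás Theorem 1.23): Let ((Ω_i, P_i))_{i∈ℕ} be a sequence of probability spaces, let m ≥ 1, and for each i ∈ ℕ let N_{1,i}, …, N_{m,i} : Ω_i → ℕ be measurable random variables. Suppose there exist λ_1, …, λ_m ∈ (0, ∞) such that for every choice of k_1, …, k_m ∈ ℕ the function ω ↦ ∏_{j=1}^m (N_{j,i}(ω))_{k_j} is integrable on (Ω_i, P_i) for every i, and lim_{i→∞} E_i[∏_{j=1}^m (N_{j,i})_{k_j}] = ∏_{j=1}^m λ_j^{k_j}. Then for all n_1, …, n_m ∈ ℕ, lim_{i→∞} P_i({ω ∈ Ω_i : N_{1,i}(ω) = n_1, …, N_{m,i}(ω) = n_m}) = ∏_{j=1}^m λ_j^{n_j} e^{−λ_j} / n_j!. -/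
open MeasureTheory Filter

/- Auxiliary definitions and lemmas -/

noncomputable def mmjpCoefA (n r : ℕ) : ℝ := (-1) ^ r / (n.factorial * r.factorial)

noncomputable def mmjpCD (n T : ℕ) : ℝ := 1 / (n.factorial * (T + 1).factorial)

lemma mmjpCD_pos (n T : ℕ) : 0 < mmjpCD n T := by unfold mmjpCD; positivity

lemma mmjp_desc_split (x n r : ℕ) :
    x.descFactorial (n + r) = x.descFactorial n * (x - n).descFactorial r := by
  induction r with
  | zero => simp
  | succ r ih =>
    rw [show n + (r + 1) = (n + r) + 1 from rfl, Nat.descFactorial_succ, ih,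
      Nat.descFactorial_succ, Nat.sub_sub]
    ring

lemma mmjp_alt_sum (M T : ℕ) (hM : 1 ≤ M) :
    ∑ r ∈ Finset.range (T + 1), (-1 : ℝ) ^ r * (M.choose r) =
      (-1) ^ T * ((M - 1).choose T) := by
  induction T with
  | zero => simp
  | succ T ih =>
    rw [Finset.sum_range_succ, ih]
    obtain ⟨M', rfl⟩ : ∃ M', M = M' + 1 := ⟨M - 1, (Nat.succ_pred_eq_of_pos hM).symm⟩
    have h : (M' + 1).choose (T + 1) = M'.choose T + M'.choose (T + 1) :=
      Nat.choose_succ_succ _ _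
    simp only [Nat.add_sub_cancel, h]
    push_cast
    ring

lemma mmjp_key_bound (n T x : ℕ) :
    |(if x = n then (1 : ℝ) else 0) -
        ∑ r ∈ Finset.range (T + 1), mmjpCoefA n r * (x.descFactorial (n + r))|
      ≤ mmjpCD n T * (x.descFactorial (n + T + 1)) := by
  simp only [mmjpCoefA, mmjpCD]
  have hfac : ∀ a : ℕ, (0:ℝ) < a.factorial := fun a => by positivity
  rcases lt_trichotomy x n with hx | rfl | hx
  · have : ∀ r ∈ Finset.range (T+1), ((-1:ℝ)^r / (n.factorial * r.factorial)) *
        (x.descFactorial (n + r)) = 0 := by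
      intro r _
      have : x.descFactorial (n + r) = 0 :=
        Nat.descFactorial_eq_zero_iff_lt.2 (lt_of_lt_of_le hx (Nat.le_add_right _ _))
      simp [this]
    rw [Finset.sum_eq_zero this, if_neg (Nat.ne_of_lt hx), sub_zero, abs_zero]
    positivity
  · -- x = n
    have hsum : ∑ r ∈ Finset.range (T + 1),
        ((-1 : ℝ) ^ r / (x.factorial * r.factorial)) * (x.descFactorial (x + r)) = 1 := by
      rw [Finset.sum_eq_single 0]
      · simp only [Finset.mem_range, pow_zero, Nat.factorial_zero, Nat.cast_one, mul_one,
          Nat.descFactorial_self, one_div]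
        rw [Nat.add_zero, Nat.descFactorial_self, inv_mul_cancel₀ (ne_of_gt (hfac x))]
      · intro r _ hr
        have : x.descFactorial (x + r) = 0 :=
          Nat.descFactorial_eq_zero_iff_lt.2 (by omega)
        simp [this]
      · simp
    rw [hsum, if_pos rfl, sub_self, abs_zero]
    positivity
  · -- x > n
    have hM : 1 ≤ x - n := by omega
    have hterm : ∀ r : ℕ, ((-1 : ℝ) ^ r / (n.factorial * r.factorial)) *
        (x.descFactorial (n + r)) =
        ((x.descFactorial n : ℝ) / n.factorial) * ((-1:ℝ)^r * ((x-n).choose r)) := by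
      intro r
      rw [mmjp_desc_split]
      simp only [Nat.descFactorial_eq_factorial_mul_choose]
      push_cast
      field_simp
    have hsum : ∑ r ∈ Finset.range (T + 1),
        ((-1 : ℝ) ^ r / (n.factorial * r.factorial)) * (x.descFactorial (n + r)) =
        ((x.descFactorial n : ℝ) / n.factorial) * ((-1)^T * ((x - n - 1).choose T)) := by
      simp only [hterm]
      rw [← Finset.mul_sum, mmjp_alt_sum _ _ hM]
    rw [hsum, if_neg (by omega), zero_sub, abs_neg, abs_mul, abs_mul]
    have h1 : |((x.descFactorial n : ℝ) / n.factorial)| =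
        (x.descFactorial n : ℝ) / n.factorial := by
      rw [abs_of_nonneg]; positivity
    have h2 : |(-1:ℝ)^T| = 1 := by rw [abs_pow, abs_neg, abs_one, one_pow]
    have h3 : |((x - n - 1).choose T : ℝ)| = ((x - n - 1).choose T : ℝ) :=
      abs_of_nonneg (by positivity)
    rw [h1, h2, h3, one_mul]
    have hchoose : (x - n - 1).choose T ≤ (x - n).choose (T + 1) := by
      obtain ⟨M, hMeq⟩ : ∃ M, x - n = M + 1 := ⟨x - n - 1, by omega⟩
      have h1' : x - n - 1 = M := by omega
      rw [h1', hMeq, Nat.choose_succ_succ]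
      omega
    have hrhs : (x.descFactorial (n + T + 1) : ℝ) =
        (x.descFactorial n : ℝ) * ((T+1).factorial * ((x - n).choose (T+1))) := by
      rw [show n + T + 1 = n + (T + 1) from rfl, mmjp_desc_split]
      simp only [Nat.descFactorial_eq_factorial_mul_choose]
      push_cast; ring
    rw [hrhs]
    rw [div_mul_eq_mul_div, one_div, inv_mul_eq_div, div_le_div_iff₀ (hfac n) (by positivity)]
    have := hfac (T+1)
    have hd : (0:ℝ) ≤ (x.descFactorial n : ℝ) := by positivity
    calc (x.descFactorial n : ℝ) * ((x - n - 1).choose T) * (n.factorial * (T+1).factorial)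
        ≤ (x.descFactorial n : ℝ) * ((x - n).choose (T+1)) * (n.factorial * (T+1).factorial) := by
          apply mul_le_mul_of_nonneg_right _ (by positivity)
          apply mul_le_mul_of_nonneg_left _ hd
          exact_mod_cast hchoose
      _ = (x.descFactorial n : ℝ) * ((T+1).factorial * ((x - n).choose (T+1))) * n.factorial := by
          ring

lemma mmjp_abs_prod_sub_prod {ι : Type*} [DecidableEq ι] (s : Finset ι) (a b D : ι → ℝ)
    (ha : ∀ j ∈ s, |a j| ≤ 1) (hD : ∀ j ∈ s, 0 ≤ D j) (hab : ∀ j ∈ s, |a j - b j| ≤ D j) :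
    |∏ j ∈ s, a j - ∏ j ∈ s, b j| ≤ ∑ j ∈ s, D j * ∏ l ∈ s.erase j, (1 + D l) := by
  induction s using Finset.induction_on with
  | empty => simp
  | @insert x s hx ih =>
    have has : ∀ j ∈ s, |a j| ≤ 1 := fun j hj => ha j (Finset.mem_insert_of_mem hj)
    have hDs : ∀ j ∈ s, 0 ≤ D j := fun j hj => hD j (Finset.mem_insert_of_mem hj)
    have habs : ∀ j ∈ s, |a j - b j| ≤ D j := fun j hj => hab j (Finset.mem_insert_of_mem hj)
    have hb : ∀ j ∈ s, |b j| ≤ 1 + D j := fun j hj => by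
      calc |b j| = |a j - (a j - b j)| := by ring_nf
        _ ≤ |a j| + |a j - b j| := abs_sub _ _
        _ ≤ 1 + D j := add_le_add (has j hj) (habs j hj)
    have hprodb : |∏ l ∈ s, b l| ≤ ∏ l ∈ s, (1 + D l) := by
      rw [Finset.abs_prod]
      exact Finset.prod_le_prod (fun j _ => abs_nonneg _) hb
    have hprodpos : (0:ℝ) ≤ ∏ l ∈ s, (1 + D l) :=
      Finset.prod_nonneg fun j hj => by have := hDs j hj; linarith
    rw [Finset.prod_insert hx, Finset.prod_insert hx, Finset.sum_insert hx,
      Finset.erase_insert hx]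
    have key : |a x * ∏ j ∈ s, a j - b x * ∏ j ∈ s, b j| ≤
        |a x| * |∏ j ∈ s, a j - ∏ j ∈ s, b j| + |a x - b x| * |∏ j ∈ s, b j| := by
      calc |a x * ∏ j ∈ s, a j - b x * ∏ j ∈ s, b j|
          = |a x * (∏ j ∈ s, a j - ∏ j ∈ s, b j) + (a x - b x) * ∏ j ∈ s, b j| := by ring_nf
        _ ≤ _ := by rw [← abs_mul, ← abs_mul]; exact abs_add_le _ _
    refine key.trans ?_
    have h1 : |a x| * |∏ j ∈ s, a j - ∏ j ∈ s, b j| ≤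
        ∑ j ∈ s, D j * ∏ l ∈ s.erase j, (1 + D l) := by
      calc |a x| * |∏ j ∈ s, a j - ∏ j ∈ s, b j| ≤ 1 * |∏ j ∈ s, a j - ∏ j ∈ s, b j| :=
            mul_le_mul_of_nonneg_right (ha x (Finset.mem_insert_self _ _)) (abs_nonneg _)
        _ = |∏ j ∈ s, a j - ∏ j ∈ s, b j| := one_mul _
        _ ≤ _ := ih has hDs habs
    have h2 : |a x - b x| * |∏ j ∈ s, b j| ≤ D x * ∏ l ∈ s, (1 + D l) :=
      mul_le_mul (hab x (Finset.mem_insert_self _ _)) hprodb (abs_nonneg _)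
        (hD x (Finset.mem_insert_self _ _))
    have h3 : ∑ j ∈ s, D j * ∏ l ∈ s.erase j, (1 + D l) ≤
        ∑ j ∈ s, D j * ∏ l ∈ (insert x s).erase j, (1 + D l) := by
      apply Finset.sum_le_sum
      intro j hj
      have hjx : j ≠ x := fun h => hx (h ▸ hj)
      rw [Finset.erase_insert_of_ne (Ne.symm hjx),
        Finset.prod_insert (fun h => hx (Finset.mem_of_mem_erase h))]
      have hpos : (0:ℝ) ≤ ∏ l ∈ s.erase j, (1 + D l) :=
        Finset.prod_nonneg fun l hl => by
          have := hDs l (Finset.mem_of_mem_erase hl); linarith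
      have : (1:ℝ) ≤ 1 + D x := by have := hD x (Finset.mem_insert_self _ _); linarith
      exact mul_le_mul_of_nonneg_left (le_mul_of_one_le_left hpos this) (hDs j hj)
    linarith

lemma mmjp_tendsto_of_approx {f : ℕ → ℝ} {L : ℝ} (G H : ℕ → ℕ → ℝ) (g h : ℕ → ℝ)
    (hG : ∀ T, Tendsto (G T) atTop (nhds (g T)))
    (hH : ∀ T, Tendsto (H T) atTop (nhds (h T)))
    (hfG : ∀ T i, |f i - G T i| ≤ H T i)
    (hg : Tendsto g atTop (nhds L)) (hh : Tendsto h atTop (nhds 0)) :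
    Tendsto f atTop (nhds L) := by
  rw [Metric.tendsto_atTop]
  intro ε hε
  have hε3 : 0 < ε / 4 := by linarith
  have h1 : ∀ᶠ T in atTop, |g T - L| < ε / 4 := by
    have := (Metric.tendsto_atTop.mp hg) (ε/4) hε3
    obtain ⟨T0, hT0⟩ := this
    exact eventually_atTop.2 ⟨T0, fun T hT => by simpa [Real.dist_eq] using hT0 T hT⟩
  have h2 : ∀ᶠ T in atTop, |h T| < ε / 4 := by
    obtain ⟨T0, hT0⟩ := (Metric.tendsto_atTop.mp hh) (ε/4) hε3
    exact eventually_atTop.2 ⟨T0, fun T hT => by simpa [Real.dist_eq] using hT0 T hT⟩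
  obtain ⟨T, hgT, hhT⟩ := (h1.and h2).exists
  have h3 : ∀ᶠ i in atTop, |G T i - g T| < ε / 4 := by
    obtain ⟨i0, hi0⟩ := (Metric.tendsto_atTop.mp (hG T)) (ε/4) hε3
    exact eventually_atTop.2 ⟨i0, fun i hi => by simpa [Real.dist_eq] using hi0 i hi⟩
  have h4 : ∀ᶠ i in atTop, H T i < ε / 2 := by
    obtain ⟨i0, hi0⟩ := (Metric.tendsto_atTop.mp (hH T)) (ε/4) hε3
    refine eventually_atTop.2 ⟨i0, fun i hi => ?_⟩
    have := hi0 i hi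
    rw [Real.dist_eq] at this
    have := abs_lt.mp this
    have := hhT
    have hha := abs_lt.mp hhT
    linarith [(abs_lt.mp (hi0 i hi)).2, hha.2]
  obtain ⟨i0, hi0⟩ := eventually_atTop.mp (h3.and h4)
  refine ⟨i0, fun i hi => ?_⟩
  obtain ⟨hA, hB⟩ := hi0 i hi
  rw [Real.dist_eq]
  calc |f i - L| ≤ |f i - G T i| + |G T i - L| := abs_sub_le _ _ _
    _ ≤ |f i - G T i| + (|G T i - g T| + |g T - L|) := by
        linarith [abs_sub_le (G T i) (g T) L]
    _ ≤ H T i + (|G T i - g T| + |g T - L|) := by linarith [hfG T i]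
    _ < ε/2 + (ε/4 + ε/4) := by linarith
    _ = ε := by ring

/-- Method of moments for joint Poisson limits (Bollobás, Theorem 1.23):
if the joint factorial moments of the vector `(N i 1, …, N i m)` converge to
`∏ j, λ j ^ k j` for every choice of `k`, then the joint probability mass
function converges to the product of Poisson mass functions. -/
theorem method_of_moments_joint_poisson
    (Ω : ℕ → Type*) [∀ i, MeasurableSpace (Ω i)]
    (P : ∀ i, Measure (Ω i)) [∀ i, IsProbabilityMeasure (P i)]
    (m : ℕ) (hm : 1 ≤ m)
    (N : ∀ i, Fin m → Ω i → ℕ) (hN : ∀ i j, Measurable (N i j))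
    (lam : Fin m → ℝ) (hlam : ∀ j, 0 < lam j)
    (hint : ∀ (k : Fin m → ℕ) (i : ℕ),
      Integrable (fun ω => ∏ j, ((N i j ω).descFactorial (k j) : ℝ)) (P i))
    (hmom : ∀ k : Fin m → ℕ,
      Tendsto (fun i => ∫ ω, ∏ j, ((N i j ω).descFactorial (k j) : ℝ) ∂(P i))
        atTop (nhds (∏ j, lam j ^ k j))) :
    ∀ n : Fin m → ℕ,
      Tendsto (fun i => ((P i) {ω | ∀ j, N i j ω = n j}).toReal)
        atTop (nhds (∏ j, lam j ^ n j * Real.exp (-lam j) / (Nat.factorial (n j)))) := by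
  intro n
  classical
  -- integrability and convergence of linear combinations of joint factorial moments
  have combo_int : ∀ (ι : Type) (K : Finset ι) (c : ι → ℝ) (k : ι → Fin m → ℕ) (i : ℕ),
      Integrable (fun ω => ∑ p ∈ K, c p * ∏ j, ((N i j ω).descFactorial (k p j) : ℝ)) (P i) :=
    fun ι K c k i => integrable_finset_sum K fun p _ => (hint (k p) i).const_mul (c p)
  have combo : ∀ (ι : Type) (K : Finset ι) (c : ι → ℝ) (k : ι → Fin m → ℕ),
      Tendsto (fun i => ∫ ω, ∑ p ∈ K, c p * ∏ j, ((N i j ω).descFactorial (k p j) : ℝ) ∂ (P i))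
        atTop (nhds (∑ p ∈ K, c p * ∏ j, lam j ^ (k p j))) := by
    intro ι K c k
    have heq : ∀ i, (∫ ω, ∑ p ∈ K, c p * ∏ j, ((N i j ω).descFactorial (k p j) : ℝ) ∂ (P i))
        = ∑ p ∈ K, c p * ∫ ω, ∏ j, ((N i j ω).descFactorial (k p j) : ℝ) ∂ (P i) := fun i => by
      rw [integral_finset_sum K fun p _ => (hint (k p) i).const_mul (c p)]
      exact Finset.sum_congr rfl fun p _ => integral_const_mul _ _
    simp only [heq]
    exact tendsto_finset_sum _ fun p _ => (hmom (k p)).const_mul (c p)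
  apply mmjp_tendsto_of_approx
    (fun T i => ∫ ω, ∑ p ∈ Fintype.piFinset (fun _ : Fin m => Finset.range (T+1)),
       (∏ j, mmjpCoefA (n j) (p j)) * ∏ j, ((N i j ω).descFactorial (n j + p j) : ℝ) ∂ (P i))
    (fun T i => ∫ ω, ∑ p ∈ (Finset.univ : Finset (Fin m × (Fin m → Bool))),
       (∏ l, (if p.2 l then mmjpCD (n l) T else if l = p.1 then 0 else 1)) *
         ∏ l, ((N i l ω).descFactorial (if p.2 l then n l + T + 1 else 0) : ℝ) ∂ (P i))
    (fun T => ∑ p ∈ Fintype.piFinset (fun _ : Fin m => Finset.range (T+1)),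
       (∏ j, mmjpCoefA (n j) (p j)) * ∏ j, lam j ^ (n j + p j))
    (fun T => ∑ p ∈ (Finset.univ : Finset (Fin m × (Fin m → Bool))),
       (∏ l, (if p.2 l then mmjpCD (n l) T else if l = p.1 then 0 else 1)) *
         ∏ l, lam l ^ (if p.2 l then n l + T + 1 else 0))
  · -- hG
    intro T
    exact combo _ _ _ _
  · -- hH
    intro T
    exact combo _ _ _ _
  · -- hfG : the key approximation bound
    intro T i
    have hS : MeasurableSet {ω : Ω i | ∀ j, N i j ω = n j} := by
      have hSeq : {ω : Ω i | ∀ j, N i j ω = n j} = ⋂ j, (N i j) ⁻¹' {n j} := by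
        ext ω; simp [Set.mem_iInter]
      rw [hSeq]
      exact MeasurableSet.iInter fun j => (hN i j) (measurableSet_singleton _)
    have hu_eq : (fun ω => ∏ j, (if N i j ω = n j then (1:ℝ) else 0))
        = Set.indicator {ω : Ω i | ∀ j, N i j ω = n j} (fun _ => (1:ℝ)) := by
      funext ω
      rw [Fintype.prod_boole]
      by_cases h : ∀ j, N i j ω = n j
      · rw [if_pos h,
          Set.indicator_of_mem (show ω ∈ {ω : Ω i | ∀ j, N i j ω = n j} from h)]
      · rw [if_neg h,
          Set.indicator_of_notMem (show ω ∉ {ω : Ω i | ∀ j, N i j ω = n j} from h)]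
    have hfu : ((P i) {ω | ∀ j, N i j ω = n j}).toReal
        = ∫ ω, ∏ j, (if N i j ω = n j then (1:ℝ) else 0) ∂ (P i) := by
      rw [hu_eq, integral_indicator_const (1:ℝ) hS, smul_eq_mul, mul_one]; rfl
    have hu_int : Integrable (fun ω => ∏ j, (if N i j ω = n j then (1:ℝ) else 0)) (P i) := by
      rw [hu_eq]; exact (integrable_const (1:ℝ)).indicator hS
    have hv_int : Integrable (fun ω =>
        ∑ p ∈ Fintype.piFinset (fun _ : Fin m => Finset.range (T+1)),
          (∏ j, mmjpCoefA (n j) (p j)) * ∏ j, ((N i j ω).descFactorial (n j + p j) : ℝ)) (P i) :=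
      combo_int _ _ _ _ i
    have hw_int : Integrable (fun ω =>
        ∑ p ∈ (Finset.univ : Finset (Fin m × (Fin m → Bool))),
          (∏ l, (if p.2 l then mmjpCD (n l) T else if l = p.1 then 0 else 1)) *
            ∏ l, ((N i l ω).descFactorial (if p.2 l then n l + T + 1 else 0) : ℝ)) (P i) :=
      combo_int _ _ _ _ i
    rw [hfu, ← integral_sub hu_int hv_int]
    have habs : |∫ ω, ((∏ j, (if N i j ω = n j then (1:ℝ) else 0)) -
          ∑ p ∈ Fintype.piFinset (fun _ : Fin m => Finset.range (T+1)),
            (∏ j, mmjpCoefA (n j) (p j)) * ∏ j, ((N i j ω).descFactorial (n j + p j) : ℝ)) ∂ (P i)|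
        ≤ ∫ ω, |(∏ j, (if N i j ω = n j then (1:ℝ) else 0)) -
          ∑ p ∈ Fintype.piFinset (fun _ : Fin m => Finset.range (T+1)),
            (∏ j, mmjpCoefA (n j) (p j)) * ∏ j, ((N i j ω).descFactorial (n j + p j) : ℝ)| ∂ (P i) := by
      simpa [Real.norm_eq_abs] using norm_integral_le_integral_norm (μ := P i)
        (fun ω => (∏ j, (if N i j ω = n j then (1:ℝ) else 0)) -
          ∑ p ∈ Fintype.piFinset (fun _ : Fin m => Finset.range (T+1)),
            (∏ j, mmjpCoefA (n j) (p j)) * ∏ j, ((N i j ω).descFactorial (n j + p j) : ℝ))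
    refine le_trans habs (integral_mono ((hu_int.sub hv_int).abs) hw_int ?_)
    intro ω
    dsimp only
    -- pointwise bound
    set D : Fin m → ℝ :=
      fun j => mmjpCD (n j) T * ((N i j ω).descFactorial (n j + T + 1) : ℝ) with hDdef
    have hv_prod : (∑ p ∈ Fintype.piFinset (fun _ : Fin m => Finset.range (T+1)),
          (∏ j, mmjpCoefA (n j) (p j)) * ∏ j, ((N i j ω).descFactorial (n j + p j) : ℝ))
        = ∏ j, ∑ r ∈ Finset.range (T+1),
            mmjpCoefA (n j) r * ((N i j ω).descFactorial (n j + r) : ℝ) := by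
      rw [Finset.prod_univ_sum]
      exact Finset.sum_congr rfl fun p _ => (Finset.prod_mul_distrib).symm
    have hw_prod : (∑ p ∈ (Finset.univ : Finset (Fin m × (Fin m → Bool))),
          (∏ l, (if p.2 l then mmjpCD (n l) T else if l = p.1 then 0 else 1)) *
            ∏ l, ((N i l ω).descFactorial (if p.2 l then n l + T + 1 else 0) : ℝ))
        = ∑ j, ∏ l, (if l = j then D l else 1 + D l) := by
      rw [Fintype.sum_prod_type]
      refine Finset.sum_congr rfl fun j _ => ?_
      have hdist : ∀ q : Fin m → Bool,
          (∏ l, (if q l then mmjpCD (n l) T else if l = j then 0 else 1)) *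
            ∏ l, ((N i l ω).descFactorial (if q l then n l + T + 1 else 0) : ℝ)
          = ∏ l, ((if q l then mmjpCD (n l) T else if l = j then 0 else 1) *
              ((N i l ω).descFactorial (if q l then n l + T + 1 else 0) : ℝ)) :=
        fun q => (Finset.prod_mul_distrib).symm
      simp only [hdist]
      have hps := Finset.prod_univ_sum (fun _ : Fin m => (Finset.univ : Finset Bool))
        (fun l e => (if e then mmjpCD (n l) T else if l = j then 0 else 1) *
          ((N i l ω).descFactorial (if e then n l + T + 1 else 0) : ℝ))
      rw [Fintype.piFinset_univ] at hps
      rw [← hps]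
      refine Finset.prod_congr rfl fun l _ => ?_
      rw [Fintype.sum_bool]
      by_cases hl : l = j
      · simp [hl, hDdef]
      · simp [hl, hDdef, Nat.descFactorial_zero]
        ring
    rw [hv_prod, hw_prod]
    have htel := mmjp_abs_prod_sub_prod (Finset.univ)
      (fun j => if N i j ω = n j then (1:ℝ) else 0)
      (fun j => ∑ r ∈ Finset.range (T+1),
        mmjpCoefA (n j) r * ((N i j ω).descFactorial (n j + r) : ℝ))
      D
      (fun j _ => by split_ifs <;> simp)
      (fun j _ => mul_nonneg (mmjpCD_pos _ _).le (by positivity))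
      (fun j _ => mmjp_key_bound (n j) T (N i j ω))
    refine htel.trans (le_of_eq (Finset.sum_congr rfl fun j _ => ?_))
    have hne : ∀ l ∈ Finset.univ.erase j, (if l = j then D l else 1 + D l) = 1 + D l :=
      fun l hl => if_neg (Finset.ne_of_mem_erase hl)
    rw [← Finset.mul_prod_erase Finset.univ (fun l => if l = j then D l else 1 + D l)
      (Finset.mem_univ j), if_pos rfl, Finset.prod_congr rfl hne]
  · -- hg
    have hrw : ∀ T : ℕ, (∑ p ∈ Fintype.piFinset (fun _ : Fin m => Finset.range (T+1)),
        (∏ j, mmjpCoefA (n j) (p j)) * ∏ j, lam j ^ (n j + p j))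
        = ∏ j, ∑ r ∈ Finset.range (T+1), mmjpCoefA (n j) r * lam j ^ (n j + r) := fun T => by
      rw [Finset.prod_univ_sum]
      exact Finset.sum_congr rfl fun p _ => (Finset.prod_mul_distrib).symm
    simp only [hrw]
    apply tendsto_finset_prod
    intro j _
    have hexp_eq : Real.exp (-lam j) = ∑' r : ℕ, (-lam j) ^ r / r.factorial := by
      rw [Real.exp_eq_exp_ℝ, NormedSpace.exp_eq_tsum_div]
    have hts : Tendsto (fun T : ℕ => ∑ r ∈ Finset.range T, (-lam j) ^ r / r.factorial)
        atTop (nhds (Real.exp (-lam j))) := by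
      rw [hexp_eq]
      exact (Real.summable_pow_div_factorial (-lam j)).hasSum.tendsto_sum_nat
    have hts1 : Tendsto (fun T : ℕ => ∑ r ∈ Finset.range (T+1), (-lam j) ^ r / r.factorial)
        atTop (nhds (Real.exp (-lam j))) := hts.comp (tendsto_add_atTop_nat 1)
    have hts2 := hts1.const_mul (lam j ^ n j / (n j).factorial)
    have hfun : ∀ T : ℕ, (lam j ^ n j / (n j).factorial) *
        ∑ r ∈ Finset.range (T+1), (-lam j) ^ r / r.factorial
        = ∑ r ∈ Finset.range (T+1), mmjpCoefA (n j) r * lam j ^ (n j + r) := fun T => by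
      rw [Finset.mul_sum]
      refine Finset.sum_congr rfl fun r _ => ?_
      simp only [mmjpCoefA]
      rw [pow_add, neg_pow]
      have h1 : ((n j).factorial : ℝ) ≠ 0 := by positivity
      have h2 : (r.factorial : ℝ) ≠ 0 := by positivity
      field_simp
    simp only [hfun] at hts2
    have hlim : lam j ^ n j * Real.exp (-lam j) / (n j).factorial
        = lam j ^ n j / (n j).factorial * Real.exp (-lam j) := by ring
    rw [hlim]
    exact hts2
  · -- hh
    have hrw : ∀ T : ℕ, (∑ p ∈ (Finset.univ : Finset (Fin m × (Fin m → Bool))),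
        (∏ l, (if p.2 l then mmjpCD (n l) T else if l = p.1 then 0 else 1)) *
          ∏ l, lam l ^ (if p.2 l then n l + T + 1 else 0))
        = ∑ j, ∏ l, (if l = j then mmjpCD (n l) T * lam l ^ (n l + T + 1)
            else 1 + mmjpCD (n l) T * lam l ^ (n l + T + 1)) := fun T => by
      rw [Fintype.sum_prod_type]
      refine Finset.sum_congr rfl fun j _ => ?_
      have hdist : ∀ q : Fin m → Bool,
          (∏ l, (if q l then mmjpCD (n l) T else if l = j then 0 else 1)) *
            ∏ l, lam l ^ (if q l then n l + T + 1 else 0)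
          = ∏ l, ((if q l then mmjpCD (n l) T else if l = j then 0 else 1) *
              lam l ^ (if q l then n l + T + 1 else 0)) :=
        fun q => (Finset.prod_mul_distrib).symm
      simp only [hdist]
      have hps := Finset.prod_univ_sum (fun _ : Fin m => (Finset.univ : Finset Bool))
        (fun l e => (if e then mmjpCD (n l) T else if l = j then 0 else 1) *
          lam l ^ (if e then n l + T + 1 else 0))
      rw [Fintype.piFinset_univ] at hps
      rw [← hps]
      refine Finset.prod_congr rfl fun l _ => ?_
      rw [Fintype.sum_bool]
      by_cases hl : l = j
      · simp [hl]
      · simp [hl]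
        ring
    simp only [hrw]
    have hzero : (0:ℝ) = ∑ j : Fin m, ∏ l : Fin m, (if l = j then (0:ℝ) else 1) := by
      symm
      apply Finset.sum_eq_zero
      intro j _
      exact Finset.prod_eq_zero (Finset.mem_univ j) (if_pos rfl)
    rw [hzero]
    apply tendsto_finset_sum
    intro j _
    apply tendsto_finset_prod
    intro l _
    have heps : Tendsto (fun T : ℕ => mmjpCD (n l) T * lam l ^ (n l + T + 1))
        atTop (nhds 0) := by
      have h0 : Tendsto (fun T : ℕ => lam l ^ T / T.factorial) atTop (nhds 0) :=
        FloorSemiring.tendsto_pow_div_factorial_atTop (lam l)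
      have h1 : Tendsto (fun T : ℕ => lam l ^ (T+1) / (T+1).factorial) atTop (nhds 0) :=
        h0.comp (tendsto_add_atTop_nat 1)
      have h2 := h1.const_mul (lam l ^ n l / (n l).factorial)
      rw [mul_zero] at h2
      refine h2.congr fun T => ?_
      simp only [mmjpCD]
      have h3 : ((n l).factorial : ℝ) ≠ 0 := by positivity
      have h4 : (((T:ℕ)+1).factorial : ℝ) ≠ 0 := by positivity
      rw [show n l + T + 1 = n l + (T + 1) from rfl, pow_add]
      field_simp
      ring
    by_cases hl : l = j
    · subst hl
      simpa using heps
    · simp only [if_neg hl]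
      have h5 := heps.const_add (1:ℝ)
      simpa using h5
end

section
/- A distribution on ℕ is determined by Poisson factorial moments: let (Ω, P) be a probability space, λ > 0, and X : Ω → ℕ a measurable random variable such that for every k ∈ ℕ the factorial power (X)_k is integrable and E[(X)_k] = λ^k. Then X is Poisson distributed with mean λ, i.e. P(X = n) = λ^n e^{−λ} / n! for every n ∈ ℕ. -/
open MeasureTheory

/-- Alternating-sum identity: the series `∑ₖ (-1)^k (m)_{n+k}/(n! k!)` is the
indicator of `m = n`. -/
lemma key_indicator (m n : ℕ) :
    ∑' k : ℕ, ((-1 : ℝ) ^ k * (m.descFactorial (n + k) : ℝ) /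
      ((n.factorial : ℝ) * (k.factorial : ℝ))) = if m = n then 1 else 0 := by
  have hzero : ∀ k ∉ Finset.range (m - n + 1),
      ((-1 : ℝ) ^ k * (m.descFactorial (n + k) : ℝ) /
        ((n.factorial : ℝ) * (k.factorial : ℝ))) = 0 := by
    intro k hk
    simp only [Finset.mem_range, not_lt] at hk
    have : m < n + k := by omega
    rw [Nat.descFactorial_eq_zero_iff_lt.mpr this]
    simp
  rw [tsum_eq_sum hzero]
  by_cases hmn : n ≤ m
  · obtain ⟨d, rfl⟩ := Nat.exists_eq_add_of_le hmn
    rw [show n + d - n = d by omega]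
    have hterm : ∀ k ∈ Finset.range (d + 1),
        ((-1 : ℝ) ^ k * ((n + d).descFactorial (n + k) : ℝ) /
          ((n.factorial : ℝ) * (k.factorial : ℝ)))
        = ((n + d).choose n : ℝ) * ((-1 : ℝ) ^ k * (d.choose k : ℝ)) := by
      intro k hk
      simp only [Finset.mem_range] at hk
      have h1 : (n + d).descFactorial (n + k)
          = d.descFactorial k * (n + d).descFactorial n := by
        have := Nat.descFactorial_mul_descFactorial (k := n) (m := n + k) (n := n + d)
          (Nat.le_add_right n k)
        simpa using this.symm
      rw [h1, Nat.descFactorial_eq_factorial_mul_choose,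
        Nat.descFactorial_eq_factorial_mul_choose]
      have hn0 : (n.factorial : ℝ) ≠ 0 := Nat.cast_ne_zero.mpr n.factorial_ne_zero
      have hk0 : (k.factorial : ℝ) ≠ 0 := Nat.cast_ne_zero.mpr k.factorial_ne_zero
      push_cast
      field_simp
    rw [Finset.sum_congr rfl hterm, ← Finset.mul_sum]
    have halt : ∑ k ∈ Finset.range (d + 1), ((-1 : ℝ) ^ k * (d.choose k : ℝ))
        = if d = 0 then 1 else 0 := by
      have := Int.alternating_sum_range_choose (n := d)
      have h2 : ((∑ i ∈ Finset.range (d + 1), (-1 : ℤ) ^ i * (d.choose i) : ℤ) : ℝ)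
          = ((if d = 0 then 1 else 0 : ℤ) : ℝ) := by rw [this]
      push_cast at h2
      split_ifs at h2 <;> simp_all
    rw [halt]
    rcases Nat.eq_zero_or_pos d with rfl | hd
    · simp
    · have h4 : ¬ (n + d = n) := by omega
      have h5 : d ≠ 0 := by omega
      simp [h4, h5]
  · have hne : m ≠ n := by omega
    rw [if_neg hne]
    apply Finset.sum_eq_zero
    intro k _
    have : m < n + k := by omega
    rw [Nat.descFactorial_eq_zero_iff_lt.mpr this]
    simp

/-- A distribution on `ℕ` is determined by Poisson factorial moments: if every
factorial power `(X)_k` is integrable with `E[(X)_k] = λ^k`, then `X` is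
Poisson distributed with mean `λ`. -/
theorem poisson_of_factorial_moments
    {Ω : Type*} [MeasurableSpace Ω] (P : Measure Ω) [IsProbabilityMeasure P]
    (X : Ω → ℕ) (hX : Measurable X) (lam : ℝ) (hlam : 0 < lam)
    (hint : ∀ k : ℕ, Integrable (fun ω => ((X ω).descFactorial k : ℝ)) P)
    (hmom : ∀ k : ℕ, ∫ ω, ((X ω).descFactorial k : ℝ) ∂P = lam ^ k) :
    ∀ n : ℕ, (P {ω | X ω = n}).toReal = lam ^ n * Real.exp (-lam) / (Nat.factorial n : ℝ) := by
  intro n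
  set F : ℕ → Ω → ℝ := fun k ω =>
    ((-1 : ℝ) ^ k * ((X ω).descFactorial (n + k) : ℝ) /
      ((n.factorial : ℝ) * (k.factorial : ℝ))) with hF
  have hFint : ∀ k, Integrable (F k) P := by
    intro k
    have : F k = fun ω => ((-1 : ℝ) ^ k / ((n.factorial : ℝ) * (k.factorial : ℝ))) *
        ((X ω).descFactorial (n + k) : ℝ) := by
      funext ω; simp only [hF]; ring
    rw [this]
    exact (hint (n + k)).const_mul _
  have hnorm : ∀ k, ∫ ω, ‖F k ω‖ ∂P = lam ^ (n + k) /
      ((n.factorial : ℝ) * (k.factorial : ℝ)) := by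
    intro k
    have h1 : ∀ ω, ‖F k ω‖ = (1 / ((n.factorial : ℝ) * (k.factorial : ℝ))) *
        ((X ω).descFactorial (n + k) : ℝ) := by
      intro ω
      have hpos : (0:ℝ) < (n.factorial : ℝ) * (k.factorial : ℝ) := by positivity
      simp only [hF]
      rw [Real.norm_eq_abs, abs_div, abs_mul, abs_pow, abs_neg, abs_one, one_pow, one_mul,
        Nat.abs_cast, abs_of_pos hpos]
      ring
    simp only [h1]
    rw [integral_const_mul, hmom (n + k)]
    ring
  have hsummable : Summable fun k => ∫ ω, ‖F k ω‖ ∂P := by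
    simp only [hnorm]
    have : (fun k => lam ^ (n + k) / ((n.factorial : ℝ) * (k.factorial : ℝ)))
        = fun k => (lam ^ n / (n.factorial : ℝ)) * (lam ^ k / (k.factorial : ℝ)) := by
      funext k; rw [pow_add]; ring
    rw [this]
    exact (Real.summable_pow_div_factorial lam).mul_left _
  have hsum := hasSum_integral_of_summable_integral_norm hFint hsummable
  -- pointwise tsum is the indicator
  have hpt : ∀ ω, ∑' k, F k ω = Set.indicator {ω | X ω = n} (fun _ => (1:ℝ)) ω := by
    intro ω
    rw [key_indicator (X ω) n]
    by_cases h : X ω = n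
    · simp [h, Set.indicator_of_mem, Set.mem_setOf_eq]
    · simp [h, Set.indicator_of_notMem, Set.mem_setOf_eq]
  have hmeas : MeasurableSet {ω | X ω = n} := hX (measurableSet_singleton n)
  have hind : ∫ ω, ∑' k, F k ω ∂P = (P {ω | X ω = n}).toReal := by
    rw [integral_congr_ae (Filter.Eventually.of_forall hpt)]
    rw [integral_indicator hmeas]
    simp [measure_lt_top]
    rfl
  rw [hind] at hsum
  -- each integral
  have hterm : ∀ k, ∫ ω, F k ω ∂P = (-1 : ℝ) ^ k * lam ^ (n + k) /
      ((n.factorial : ℝ) * (k.factorial : ℝ)) := by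
    intro k
    have : F k = fun ω => ((-1 : ℝ) ^ k / ((n.factorial : ℝ) * (k.factorial : ℝ))) *
        ((X ω).descFactorial (n + k) : ℝ) := by
      funext ω; simp only [hF]; ring
    rw [this, integral_const_mul, hmom (n + k)]
    ring
  simp only [hterm] at hsum
  -- the exponential series
  have hexp : HasSum (fun k => (-1 : ℝ) ^ k * lam ^ (n + k) /
      ((n.factorial : ℝ) * (k.factorial : ℝ)))
      (lam ^ n * Real.exp (-lam) / (n.factorial : ℝ)) := by
    have h1 : HasSum (fun k : ℕ => (-lam) ^ k / (k.factorial : ℝ)) (Real.exp (-lam)) := by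
      rw [Real.exp_eq_exp_ℝ]
      exact NormedSpace.expSeries_div_hasSum_exp (-lam)
    have h2 := h1.mul_left (lam ^ n / (n.factorial : ℝ))
    have h3 : (fun k : ℕ => (lam ^ n / (n.factorial : ℝ)) * ((-lam) ^ k / (k.factorial : ℝ)))
        = fun k => (-1 : ℝ) ^ k * lam ^ (n + k) / ((n.factorial : ℝ) * (k.factorial : ℝ)) := by
      funext k
      rw [neg_pow, pow_add]
      ring
    rw [h3] at h2
    rw [show lam ^ n * Real.exp (-lam) / (n.factorial : ℝ) = lam ^ n / (n.factorial : ℝ) * Real.exp (-lam) by ring]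
    exact h2
  exact hsum.unique hexp
end

section
/- Inclusion–exclusion formula for the point masses of an ℕ-valued random variable in terms of its factorial moments: let (Ω, P) be a probability space and X : Ω → ℕ measurable with E[3^X] < ∞. Then for every n ∈ ℕ: each factorial power (X)_{n+j} (j ∈ ℕ) is integrable, the series ∑_{j=0}^∞ E[(X)_{n+j}] / (n! · j!) converges, and P(X = n) = ∑_{j=0}^∞ (−1)^j · E[(X)_{n+j}] / (n! · j!). -/
open MeasureTheory Finset

lemma aux_choose_mul (x n j : ℕ) :
    x.choose (n + j) * (n + j).choose n = x.choose n * (x - n).choose j := by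
  rcases le_or_gt (n + j) x with h | h
  · have := Nat.choose_mul (n := x) (Nat.le_add_right n j)
    simpa using this
  · rw [Nat.choose_eq_zero_of_lt h, Nat.zero_mul]
    rcases le_or_gt n x with h2 | h2
    · have : x - n < j := by omega
      rw [Nat.choose_eq_zero_of_lt this, Nat.mul_zero]
    · rw [Nat.choose_eq_zero_of_lt h2, Nat.zero_mul]

lemma aux_sum_choose_le (m N : ℕ) : ∑ j ∈ range N, m.choose j ≤ 2 ^ m := by
  calc ∑ j ∈ range N, m.choose j ≤ ∑ j ∈ range (max N (m+1)), m.choose j :=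
        Finset.sum_le_sum_of_subset (Finset.range_subset_range.2 (le_max_left _ _))
    _ = ∑ j ∈ range (m+1), m.choose j := by
        refine (Finset.sum_subset (Finset.range_subset_range.2 (le_max_right _ _)) ?_).symm
        intro k _ hk
        simp only [Finset.mem_range, not_lt] at hk
        exact Nat.choose_eq_zero_of_lt hk
    _ = 2 ^ m := Nat.sum_range_choose m

lemma aux_choose_le (x k : ℕ) : x.choose k ≤ 2 ^ x :=
  le_trans (Finset.single_le_sum (f := fun j => x.choose j)
    (fun _ _ => Nat.zero_le _) (Finset.mem_range.2 (Nat.lt_succ_self k))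
    |>.trans (aux_sum_choose_le x (k+1))) le_rfl

lemma aux_choose_two_pow_le (x n : ℕ) : x.choose n * 2 ^ (x - n) ≤ 3 ^ x := by
  rcases le_or_gt n x with h | h
  · have key : (1 + 2 : ℕ) ^ x = ∑ m ∈ range (x+1), 1 ^ m * 2 ^ (x - m) * x.choose m :=
      add_pow 1 2 x
    have hmem : n ∈ range (x+1) := Finset.mem_range.2 (by omega)
    have hle := Finset.single_le_sum (f := fun m => 1 ^ m * 2 ^ (x - m) * x.choose m)
      (fun i _ => Nat.zero_le _) hmem
    calc x.choose n * 2 ^ (x - n) = 1 ^ n * 2 ^ (x - n) * x.choose n := by ring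
      _ ≤ ∑ m ∈ range (x+1), 1 ^ m * 2 ^ (x - m) * x.choose m := hle
      _ = 3 ^ x := by rw [← key]
  · rw [Nat.choose_eq_zero_of_lt h, Nat.zero_mul]; exact Nat.zero_le _

lemma aux_sum_bound (x n N : ℕ) :
    ∑ j ∈ range N, (n + j).choose n * x.choose (n + j) ≤ 3 ^ x := by
  calc ∑ j ∈ range N, (n + j).choose n * x.choose (n + j)
      = ∑ j ∈ range N, x.choose n * (x - n).choose j := by
        refine Finset.sum_congr rfl fun j _ => ?_
        rw [Nat.mul_comm, aux_choose_mul]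
    _ = x.choose n * ∑ j ∈ range N, (x - n).choose j := by rw [Finset.mul_sum]
    _ ≤ x.choose n * 2 ^ (x - n) := Nat.mul_le_mul_left _ (aux_sum_choose_le _ _)
    _ ≤ 3 ^ x := aux_choose_two_pow_le x n

lemma aux_descFactorial_div (x n j : ℕ) :
    ((x.descFactorial (n + j) : ℝ)) / ((n.factorial : ℝ) * (j.factorial : ℝ))
      = ((n + j).choose n * x.choose (n + j) : ℕ) := by
  have hfac : (n + j).choose n * n.factorial * j.factorial = (n + j).factorial := by
    have := Nat.choose_mul_factorial_mul_factorial (Nat.le_add_right n j)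
    simpa using this
  have h0 : ((n.factorial : ℝ) * (j.factorial : ℝ)) ≠ 0 := by positivity
  rw [div_eq_iff h0, Nat.descFactorial_eq_factorial_mul_choose]
  push_cast [← hfac]
  ring

lemma aux_real_sum_bound (x n N : ℕ) :
    ∑ j ∈ range N, (x.descFactorial (n + j) : ℝ) / ((n.factorial : ℝ) * (j.factorial : ℝ))
      ≤ 3 ^ x := by
  calc ∑ j ∈ range N, (x.descFactorial (n + j) : ℝ) / ((n.factorial : ℝ) * (j.factorial : ℝ))
      = ((∑ j ∈ range N, (n + j).choose n * x.choose (n + j) : ℕ) : ℝ) := by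
        rw [Nat.cast_sum]
        exact Finset.sum_congr rfl fun j _ => aux_descFactorial_div x n j
    _ ≤ ((3 ^ x : ℕ) : ℝ) := Nat.cast_le.2 (aux_sum_bound x n N)
    _ = 3 ^ x := by push_cast; ring

lemma aux_alt_sum (m : ℕ) :
    ∑ j ∈ range (m+1), (-1:ℝ) ^ j * m.choose j = if m = 0 then 1 else 0 := by
  have key : ∑ j ∈ range (m+1), (-1:ℝ) ^ j * m.choose j = ((-1:ℝ) + 1) ^ m := by
    rw [add_pow]
    exact (Finset.sum_congr rfl fun j _ => by rw [one_pow, mul_one]).symm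
  rw [key]
  rcases Nat.eq_zero_or_pos m with h | h
  · subst h; simp
  · rw [if_neg (by omega), neg_add_cancel]
    exact zero_pow h.ne'

lemma aux_tsum_pointwise (x n : ℕ) :
    ∑' j : ℕ, (-1 : ℝ) ^ j * ((n + j).choose n * x.choose (n + j) : ℕ)
      = if x = n then 1 else 0 := by
  have hsupp : ∀ j ∉ range (x - n + 1),
      (-1 : ℝ) ^ j * ((n + j).choose n * x.choose (n + j) : ℕ) = 0 := by
    intro j hj
    simp only [Finset.mem_range, not_lt] at hj
    have : x < n + j := by omega
    rw [Nat.choose_eq_zero_of_lt this, Nat.mul_zero, Nat.cast_zero, mul_zero]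
  rw [tsum_eq_sum hsupp]
  have hsum : ∑ j ∈ range (x - n + 1), (-1 : ℝ) ^ j * ((n + j).choose n * x.choose (n + j) : ℕ)
      = (x.choose n : ℝ) * ∑ j ∈ range (x - n + 1), (-1:ℝ) ^ j * (x - n).choose j := by
    rw [Finset.mul_sum]
    refine Finset.sum_congr rfl fun j _ => ?_
    rw [Nat.mul_comm, aux_choose_mul]
    push_cast; ring
  rw [hsum, aux_alt_sum]
  rcases eq_or_ne x n with h | h
  · subst h; simp
  · rw [if_neg h]
    rcases le_or_gt n x with h3 | h3
    · rw [if_neg (by omega), mul_zero]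
    · rw [Nat.choose_eq_zero_of_lt h3, Nat.cast_zero, zero_mul]

/-- Inclusion–exclusion for the point masses of an `ℕ`-valued random variable
in terms of its factorial moments: if `E[3^X] < ∞` then
`P(X = n) = ∑_{j} (−1)^j E[(X)_{n+j}] / (n! j!)`. -/
theorem prob_eq_alternating_sum_factorial_moments
    {Ω : Type*} [MeasurableSpace Ω] (P : Measure Ω) [IsProbabilityMeasure P]
    (X : Ω → ℕ) (hX : Measurable X)
    (hint : Integrable (fun ω => (3 : ℝ) ^ X ω) P) (n : ℕ) :
    (∀ j : ℕ, Integrable (fun ω => ((X ω).descFactorial (n + j) : ℝ)) P) ∧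
    Summable (fun j : ℕ =>
      (∫ ω, ((X ω).descFactorial (n + j) : ℝ) ∂P) / ((Nat.factorial n : ℝ) * (Nat.factorial j : ℝ))) ∧
    (P {ω | X ω = n}).toReal
      = ∑' j : ℕ, (-1 : ℝ) ^ j
          * (∫ ω, ((X ω).descFactorial (n + j) : ℝ) ∂P) / ((Nat.factorial n : ℝ) * (Nat.factorial j : ℝ)) := by
  -- measurability of everything composed with X
  have hcomp : ∀ g : ℕ → ℝ, Measurable fun ω => g (X ω) := fun g =>
    (measurable_from_top (f := g)).comp hX
  -- integrability of descending factorials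
  have hInt : ∀ j : ℕ, Integrable (fun ω => ((X ω).descFactorial (n + j) : ℝ)) P := by
    intro j
    have hb : Integrable (fun ω => ((n + j).factorial : ℝ) * 3 ^ X ω) P := hint.const_mul _
    refine hb.mono ((hcomp fun x => ((x.descFactorial (n + j) : ℝ))).aestronglyMeasurable) ?_
    refine Filter.Eventually.of_forall fun ω => ?_
    rw [Real.norm_of_nonneg (by positivity), Real.norm_of_nonneg (by positivity)]
    have : (X ω).descFactorial (n + j) ≤ (n + j).factorial * 3 ^ X ω := by
      rw [Nat.descFactorial_eq_factorial_mul_choose]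
      exact Nat.mul_le_mul_left _ ((aux_choose_le _ _).trans
        (Nat.pow_le_pow_left (by norm_num) _))
    calc ((X ω).descFactorial (n + j) : ℝ)
        ≤ (((n + j).factorial * 3 ^ X ω : ℕ) : ℝ) := Nat.cast_le.2 this
      _ = ((n + j).factorial : ℝ) * 3 ^ X ω := by push_cast; ring
  refine ⟨hInt, ?_, ?_⟩
  -- a common ingredient: integrability of the normalized terms
  have hIntDiv : ∀ j : ℕ, Integrable
      (fun ω => ((X ω).descFactorial (n + j) : ℝ) / ((n.factorial : ℝ) * (j.factorial : ℝ))) P :=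
    fun j => (hInt j).div_const _
  have hsum_int : ∀ N : ℕ,
      ∑ j ∈ range N, (∫ ω, ((X ω).descFactorial (n + j) : ℝ) ∂P)
          / ((n.factorial : ℝ) * (j.factorial : ℝ)) ≤ ∫ ω, (3:ℝ) ^ X ω ∂P := by
    intro N
    have h1 : ∑ j ∈ range N, (∫ ω, ((X ω).descFactorial (n + j) : ℝ) ∂P)
          / ((n.factorial : ℝ) * (j.factorial : ℝ))
        = ∫ ω, ∑ j ∈ range N,
            ((X ω).descFactorial (n + j) : ℝ) / ((n.factorial : ℝ) * (j.factorial : ℝ)) ∂P := by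
      rw [integral_finset_sum _ fun j _ => hIntDiv j]
      exact Finset.sum_congr rfl fun j _ => (integral_div _ _).symm
    rw [h1]
    exact integral_mono (integrable_finset_sum _ fun j _ => hIntDiv j) hint
      fun ω => aux_real_sum_bound (X ω) n N
  · -- summability
    refine summable_of_sum_range_le (c := ∫ ω, (3:ℝ) ^ X ω ∂P) (fun j => ?_) hsum_int
    exact div_nonneg (integral_nonneg fun ω => by positivity) (by positivity)
  · -- the identity
    have hmeasf : ∀ j : ℕ, AEStronglyMeasurable
        (fun ω => (-1:ℝ) ^ j * ((X ω).descFactorial (n + j) : ℝ)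
          / ((n.factorial : ℝ) * (j.factorial : ℝ))) P :=
      fun j => (hcomp fun x => (-1:ℝ) ^ j * (x.descFactorial (n + j) : ℝ)
          / ((n.factorial : ℝ) * (j.factorial : ℝ))).aestronglyMeasurable
    have habs : ∀ (j : ℕ) (ω : Ω),
        ‖(-1:ℝ) ^ j * ((X ω).descFactorial (n + j) : ℝ)
          / ((n.factorial : ℝ) * (j.factorial : ℝ))‖
        = ((X ω).descFactorial (n + j) : ℝ) / ((n.factorial : ℝ) * (j.factorial : ℝ)) := by
      intro j ω
      rw [norm_div, norm_mul, norm_pow, norm_neg, norm_one, one_pow, one_mul,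
        Real.norm_of_nonneg (by positivity), Real.norm_of_nonneg (by positivity)]
    have hlint : ∑' j : ℕ, ∫⁻ ω, ‖(-1:ℝ) ^ j * ((X ω).descFactorial (n + j) : ℝ)
          / ((n.factorial : ℝ) * (j.factorial : ℝ))‖₊ ∂P ≠ ⊤ := by
      refine ne_of_lt (lt_of_le_of_lt ?_ hint.2)
      refine ENNReal.tsum_le_of_sum_range_le fun N => ?_
      have hmN : ∀ j ∈ range N, Measurable fun ω =>
          (‖(-1:ℝ) ^ j * ((X ω).descFactorial (n + j) : ℝ)
            / ((n.factorial : ℝ) * (j.factorial : ℝ))‖₊ : ENNReal) :=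
        fun j _ => (hcomp fun x => (-1:ℝ) ^ j * (x.descFactorial (n + j) : ℝ)
          / ((n.factorial : ℝ) * (j.factorial : ℝ))).nnnorm.coe_nnreal_ennreal
      rw [← lintegral_finset_sum _ hmN]
      refine lintegral_mono fun ω => ?_
      have h2 : ∑ j ∈ range N, (‖(-1:ℝ) ^ j * ((X ω).descFactorial (n + j) : ℝ)
            / ((n.factorial : ℝ) * (j.factorial : ℝ))‖₊ : ENNReal)
          = ENNReal.ofReal (∑ j ∈ range N,
            ((X ω).descFactorial (n + j) : ℝ) / ((n.factorial : ℝ) * (j.factorial : ℝ))) := by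
        rw [ENNReal.ofReal_sum_of_nonneg fun j _ => by positivity]
        refine Finset.sum_congr rfl fun j _ => ?_
        rw [← enorm_eq_nnnorm, ← ofReal_norm, habs]
      rw [h2, ← ofReal_norm, Real.norm_of_nonneg (by positivity)]
      exact ENNReal.ofReal_le_ofReal (aux_real_sum_bound (X ω) n N)
    have hind : (P {ω | X ω = n}).toReal
        = ∫ ω, (if X ω = n then (1:ℝ) else 0) ∂P := by
      have hms : MeasurableSet {ω | X ω = n} := hX (measurableSet_singleton n)
      have : (fun ω => (if X ω = n then (1:ℝ) else 0))
          = Set.indicator {ω | X ω = n} (fun _ => (1:ℝ)) := by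
        funext ω
        simp [Set.indicator_apply, Set.mem_setOf_eq]
      rw [this, integral_indicator_const _ hms, smul_eq_mul, mul_one]; rfl
    have hpt : ∀ ω : Ω, (if X ω = n then (1:ℝ) else 0)
        = ∑' j : ℕ, (-1:ℝ) ^ j * ((X ω).descFactorial (n + j) : ℝ)
            / ((n.factorial : ℝ) * (j.factorial : ℝ)) := by
      intro ω
      rw [← aux_tsum_pointwise (X ω) n]
      refine tsum_congr fun j => ?_
      rw [mul_div_assoc, aux_descFactorial_div]
    calc (P {ω | X ω = n}).toReal
        = ∫ ω, (if X ω = n then (1:ℝ) else 0) ∂P := hind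
      _ = ∫ ω, ∑' j : ℕ, (-1:ℝ) ^ j * ((X ω).descFactorial (n + j) : ℝ)
            / ((n.factorial : ℝ) * (j.factorial : ℝ)) ∂P := by
          exact integral_congr_ae (Filter.Eventually.of_forall hpt)
      _ = ∑' j : ℕ, ∫ ω, (-1:ℝ) ^ j * ((X ω).descFactorial (n + j) : ℝ)
            / ((n.factorial : ℝ) * (j.factorial : ℝ)) ∂P := integral_tsum hmeasf hlint
      _ = ∑' j : ℕ, (-1 : ℝ) ^ j
          * (∫ ω, ((X ω).descFactorial (n + j) : ℝ) ∂P)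
            / ((Nat.factorial n : ℝ) * (Nat.factorial j : ℝ)) := by
          refine tsum_congr fun j => ?_
          rw [integral_div, integral_const_mul]
end
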